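/- Let A be an n×n quaternion matrix, let k ≥ 1 be an integer, let D be a Drazin inverse of A with index k, and let Y be a Moore–Penrose inverse of A. Set A₁ := A·D·A (the core part of the core-nilpotent decomposition of A). Then the matrix X := Y·A₁·Y = (Y·A)·D·(A·Y) satisfies X·A·X = X, A·X·A = A₁, A·X = A₁·Y, and X·A = Y·A₁; moreover, X is the unique matrix satisfying these four equations (X is the CMP inverse A^{c,†} = Q_A A^d P_A of A). -/
import Mathlib


/-- The CMP inverse `A^{c,†} = Q_A·A^d·P_A`: with `A₁ := A·D·A`, the matrix
`X = Y·A₁·Y` satisfies `X·A·X = X`, `A·X·A = A₁`, `A·X = A₁·Y`, `X·A = Y·A₁`,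
and it is the unique matrix satisfying these four equations. -/
theorem cmp_inverse {n : ℕ} (k : ℕ) (hk : 1 ≤ k)
    (A D Y : Matrix (Fin n) (Fin n) (Quaternion ℝ))
    (hD1 : A * D = D * A) (hD2 : D * A * D = D) (hD3 : D * A ^ (k + 1) = A ^ k)
    (hY1 : A * Y * A = A) (hY2 : Y * A * Y = Y)
    (hY3 : (A * Y).conjTranspose = A * Y) (hY4 : (Y * A).conjTranspose = Y * A) :
    ((Y * (A * D * A) * Y) * A * (Y * (A * D * A) * Y) = Y * (A * D * A) * Y ∧
     A * (Y * (A * D * A) * Y) * A = A * D * A ∧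
     A * (Y * (A * D * A) * Y) = (A * D * A) * Y ∧
     (Y * (A * D * A) * Y) * A = Y * (A * D * A)) ∧
    (∀ X : Matrix (Fin n) (Fin n) (Quaternion ℝ),
      X * A * X = X → A * X * A = A * D * A → A * X = (A * D * A) * Y →
      X * A = Y * (A * D * A) → X = Y * (A * D * A) * Y) := by
  have hY1r : A * (Y * A) = A := by rw [← mul_assoc, hY1]
  have hY2r : Y * (A * Y) = Y := by rw [← mul_assoc, hY2]
  have hD2r : D * (A * D) = D := by rw [← mul_assoc, hD2]
  have hY1' : ∀ Z, A * (Y * (A * Z)) = A * Z := fun Z => by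
    rw [← mul_assoc, ← mul_assoc, hY1]
  have hY2' : ∀ Z, Y * (A * (Y * Z)) = Y * Z := fun Z => by
    rw [← mul_assoc, ← mul_assoc, hY2]
  have hD2' : ∀ Z, D * (A * (D * Z)) = D * Z := fun Z => by
    rw [← mul_assoc, ← mul_assoc, hD2]
  refine ⟨⟨?_, ?_, ?_, ?_⟩, ?_⟩
  · simp only [mul_assoc, hY1', hY2', hD2', hY1r, hY2r, hD2r]
  · simp only [mul_assoc, hY1', hY2', hD2', hY1r, hY2r, hD2r]
  · simp only [mul_assoc, hY1', hY2', hD2', hY1r, hY2r, hD2r]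
  · simp only [mul_assoc, hY1', hY2', hD2', hY1r, hY2r, hD2r]
  · intro X h1 h2 h3 h4
    have : X = X * (A * (D * (A * Y))) := by
      conv_lhs => rw [← h1]
      rw [mul_assoc, h3]
      simp only [mul_assoc]
    rw [this, ← mul_assoc, h4]
    simp only [mul_assoc, hY1', hY2', hD2', hY1r, hY2r, hD2r]
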